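/- Let λ be an uncountable cardinal and μ a cardinal. Suppose (A_i)_{i<μ} is a family of subsets of λ, each of cardinality ℵ₁, such that A_i ∩ A_j is finite whenever i ≠ j. Then every 𝔰𝔱_λ-set has cardinality at least μ; consequently 𝔰𝔱_λ ≥ μ. -/

import Mathlib

open Cardinal Set

/-- `X` is a `𝔰𝔱_l`-family on (the canonical type of order type) `l`:
a collection of countably infinite subsets of `l` such that every subset of
cardinality `ℵ₁` contains a member of `X`. -/
def IsStickFam (l : Cardinal) (X : Set (Set l.ord.ToType)) : Prop :=
  (∀ x ∈ X, #x = ℵ₀) ∧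
    ∀ y : Set l.ord.ToType, #y = aleph 1 → ∃ x ∈ X, x ⊆ y

/-- The cardinal `𝔰𝔱_l`. -/
noncomputable def stickL (l : Cardinal) : Cardinal :=
  sInf {c | ∃ X : Set (Set l.ord.ToType), IsStickFam l X ∧ #X = c}

/-- The cardinal `𝔰𝔱` (`= 𝔰𝔱_{ℵ₁}`). -/
noncomputable def stick : Cardinal := stickL (aleph 1)

/-- The cardinal `𝔰𝔱'`: the least `κ ≥ ℵ₁` carrying a stick family of size `κ`. -/
noncomputable def stick' : Cardinal :=
  sInf {k | aleph 1 ≤ k ∧ ∃ X : Set (Set k.ord.ToType), IsStickFam k X ∧ #X = k}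

theorem mu_le_stickL_of_almost_disjoint_family (l μ : Cardinal) (hl : ℵ₀ < l)
    (A : μ.ord.ToType → Set l.ord.ToType)
    (hA : ∀ i, #(A i) = aleph 1)
    (hdisj : ∀ i j, i ≠ j → (A i ∩ A j).Finite) :
    (∀ X : Set (Set l.ord.ToType), IsStickFam l X → μ ≤ #X) ∧ μ ≤ stickL l := by
  have key : ∀ X : Set (Set l.ord.ToType), IsStickFam l X → μ ≤ #X := by
    rintro X ⟨hX1, hX2⟩
    choose x hxX hxA using fun i => hX2 (A i) (hA i)
    have hinf : ∀ i, (x i).Infinite := by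
      intro i
      rw [← Set.infinite_coe_iff, ← Cardinal.aleph0_le_mk_iff, hX1 _ (hxX i)]
    have hinj : Function.Injective fun i => (⟨x i, hxX i⟩ : X) := by
      intro i j hij
      by_contra hne
      have hxe : x i = x j := congrArg Subtype.val hij
      have hsub : x i ⊆ A i ∩ A j :=
        fun a ha => ⟨hxA i ha, hxA j (hxe ▸ ha)⟩
      exact hinf i (((hdisj i j hne).subset hsub))
    calc μ = #(μ.ord.ToType) := (Cardinal.mk_ord_toType μ).symm
      _ ≤ #X := Cardinal.mk_le_of_injective hinj
  refine ⟨key, ?_⟩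
  refine le_csInf ?_ (by rintro c ⟨X, hX, rfl⟩; exact key X hX)
  refine ⟨#{x : Set l.ord.ToType | #x = ℵ₀}, {x | #x = ℵ₀}, ⟨fun x hx => hx, ?_⟩, rfl⟩
  intro y hy
  have : ℵ₀ ≤ #y := by rw [hy]; exact aleph0_le_aleph 1
  obtain ⟨p, hp, hpc⟩ := Cardinal.le_mk_iff_exists_subset.mp this
  exact ⟨p, hpc, hp⟩
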